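/- For probability densities p and q on a finite set S, the quantity D(p,q) = 1/2 − ∑_{s∈S} p(s)q(s)/(p(s)+q(s)) (with the convention that terms with p(s)+q(s)=0 contribute 0) is nonnegative, and equals 0 if and only if p = q. -/

import Mathlib

theorem stmt_3 {S : Type*} [Fintype S] (p q : S → ℝ)
    (hp : ∀ s, 0 ≤ p s) (hq : ∀ s, 0 ≤ q s)
    (hps : ∑ s, p s = 1) (hqs : ∑ s, q s = 1) :
    0 ≤ 1 / 2 - ∑ s, p s * q s / (p s + q s) ∧
      (1 / 2 - ∑ s, p s * q s / (p s + q s) = 0 ↔ p = q) := by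
  set f : S → ℝ := fun s => (p s + q s) / 4 - p s * q s / (p s + q s) with hf
  have hsum : 1 / 2 - ∑ s, p s * q s / (p s + q s) = ∑ s, f s := by
    rw [Finset.sum_sub_distrib, ← Finset.sum_div, Finset.sum_add_distrib, hps, hqs]
    ring
  have hnn : ∀ s, 0 ≤ f s := by
    intro s
    rcases eq_or_lt_of_le (add_nonneg (hp s) (hq s)) with h | h
    · simp [hf, ← h]
    · have : f s = (p s - q s) ^ 2 / (4 * (p s + q s)) := by
        simp only [hf]
        field_simp
        ring
      rw [this]
      positivity
  have hzero : ∀ s, f s = 0 ↔ p s = q s := by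
    intro s
    rcases eq_or_lt_of_le (add_nonneg (hp s) (hq s)) with h | h
    · have hp0 : p s = 0 := le_antisymm (by linarith [hq s]) (hp s)
      have hq0 : q s = 0 := by linarith
      simp [hf, hp0, hq0]
    · have : f s = (p s - q s) ^ 2 / (4 * (p s + q s)) := by
        simp only [hf]
        field_simp
        ring
      rw [this]
      constructor
      · intro h0
        have h4 : 4 * (p s + q s) ≠ 0 := by positivity
        have : (p s - q s) ^ 2 = 0 := by
          have := (div_eq_zero_iff.mp h0).resolve_right h4
          exact this
        nlinarith [this]
      · intro h0; rw [h0]; simp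
  rw [hsum]
  refine ⟨Finset.sum_nonneg fun s _ => hnn s, ?_, fun h => by
    apply Finset.sum_eq_zero; intro s _; exact (hzero s).mpr (congrFun h s)⟩
  intro h0
  funext s
  have := (Finset.sum_eq_zero_iff_of_nonneg (fun s _ => hnn s)).mp h0 s (Finset.mem_univ s)
  exact (hzero s).mp this
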